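/- Let X be a finite set of clients partitioned into m disjoint nonempty groups X_1,…,X_m, let 𝓛 be a finite nonempty set of locations in the same metric space (with distance d), and let f_v ≥ 0 be the opening cost of each v ∈ 𝓛. Let z_{uv} ∈ [0,1] (u ∈ X, v ∈ 𝓛) and y_v ∈ [0,1] satisfy Σ_{v∈𝓛} z_{uv} = 1 for every u and z_{uv} ≤ y_v for all u,v, and suppose (1/|X_i|) Σ_{u∈X_i} Σ_{v∈𝓛} d(u,v) z_{uv} ≤ λ for every group i. Then there exists a nonempty set L ⊆ 𝓛 such that (1/|X_i|) Σ_{u∈X_i} d(u,L) ≤ 4λ for every group i, and Σ_{v∈L} f_v ≤ 4 Σ_{v∈𝓛} y_v f_v. In particular, the fair facility location objective max_i (1/|X_i|) Σ_{u∈X_i} d(u,L) + (1/|X|) Σ_{v∈L} f_v is at most 4 times the optimal value of the corresponding LP relaxation, so fair facility location admits a 4-approximation. -/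

import Mathlib

open Finset

lemma greedy_cluster {α : Type*} [DecidableEq α] (R : α → ℝ) (B : α → Finset α) :
    ∀ X : Finset α, (∀ u ∈ X, (B u).Nonempty) →
    ∃ S, S ⊆ X ∧ (∀ s ∈ S, ∀ t ∈ S, s ≠ t → Disjoint (B s) (B t)) ∧
      ∀ u ∈ X, ∃ s ∈ S, R s ≤ R u ∧ ((B s) ∩ (B u)).Nonempty := by
  intro X
  induction X using Finset.strongInduction with
  | _ X ih =>
    intro hBne
    rcases X.eq_empty_or_nonempty with rfl | hX
    · exact ⟨∅, by simp, by simp, by simp⟩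
    · classical
      obtain ⟨u0, hu0, hmin⟩ := X.exists_min_image R hX
      set T := X.filter (fun u => ((B u0) ∩ (B u)).Nonempty) with hT
      have hu0T : u0 ∈ T := by
        rw [hT, mem_filter]
        exact ⟨hu0, by simpa using hBne u0 hu0⟩
      have hTsub : T ⊆ X := filter_subset _ _
      have hss : X \ T ⊂ X := Finset.sdiff_ssubset hTsub ⟨u0, hu0T⟩
      obtain ⟨S', hS'sub, hS'disj, hS'cov⟩ := ih (X \ T) hss
        (fun u hu => hBne u (mem_sdiff.mp hu).1)
      have hnotT : ∀ s ∈ S', Disjoint (B u0) (B s) := by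
        intro s hs
        have := (mem_sdiff.mp (hS'sub hs)).2
        rw [hT, mem_filter] at this
        push_neg at this
        have h2 := this (mem_sdiff.mp (hS'sub hs)).1
        rwa [← Finset.disjoint_iff_inter_eq_empty] at h2
      refine ⟨insert u0 S', ?_, ?_, ?_⟩
      · intro s hs
        rcases mem_insert.mp hs with rfl | hs
        · exact hu0
        · exact (mem_sdiff.mp (hS'sub hs)).1
      · intro s hs t ht hst
        rcases mem_insert.mp hs with h | hs2
        · subst h
          rcases mem_insert.mp ht with h' | ht2
          · exact absurd h'.symm hst
          · exact hnotT t ht2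
        · rcases mem_insert.mp ht with h' | ht2
          · subst h'
            exact (hnotT s hs2).symm
          · exact hS'disj s hs2 t ht2 hst
      · intro u hu
        by_cases huT : u ∈ T
        · refine ⟨u0, mem_insert_self _ _, hmin u hu, ?_⟩
          rw [hT, mem_filter] at huT
          exact huT.2
        · obtain ⟨s, hs, h1, h2⟩ := hS'cov u (mem_sdiff.mpr ⟨hu, huT⟩)
          exact ⟨s, mem_insert_of_mem hs, h1, h2⟩

/-- Theorem "facility": Given a fractional solution `(z, y, λ)` of
the fair facility location LP (clients `Xc` partitioned into groups `Xs i`,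
locations `Ls` with opening costs `f`), there is a nonempty `L ⊆ Ls` whose
per-group average connection cost is at most `4λ` and whose total opening cost
is at most `4 ∑_{v ∈ Ls} y v · f v`. In particular the fair facility location
objective of `L` is at most `4` times the LP objective, so fair facility
location admits a `4`-approximation. -/
theorem fair_facility_location_four_approx {Ω : Type*} [MetricSpace Ω]
    (Xc : Finset Ω) (Ls : Finset Ω) (hLs : Ls.Nonempty)
    {m : ℕ} (hm : 0 < m) (Xs : Fin m → Finset Ω)
    (hXne : ∀ i, (Xs i).Nonempty)
    (hXdisj : ∀ i j, i ≠ j → Disjoint (Xs i) (Xs j))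
    (hXsub : ∀ i, Xs i ⊆ Xc)
    (hXcover : ∀ x ∈ Xc, ∃ i, x ∈ Xs i)
    (f : Ω → ℝ) (hf : ∀ v ∈ Ls, 0 ≤ f v)
    (z : Ω → Ω → ℝ) (y : Ω → ℝ) (lam : ℝ)
    (hz01 : ∀ u ∈ Xc, ∀ v ∈ Ls, 0 ≤ z u v ∧ z u v ≤ 1)
    (hy01 : ∀ v ∈ Ls, 0 ≤ y v ∧ y v ≤ 1)
    (hz1 : ∀ u ∈ Xc, ∑ v ∈ Ls, z u v = 1)
    (hzy : ∀ u ∈ Xc, ∀ v ∈ Ls, z u v ≤ y v)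
    (hlam : ∀ i, (1 / ((Xs i).card : ℝ)) * ∑ u ∈ Xs i, ∑ v ∈ Ls, dist u v * z u v ≤ lam) :
    ∃ (L : Finset Ω) (hL : L.Nonempty), L ⊆ Ls ∧
      (∀ i, (1 / ((Xs i).card : ℝ)) * ∑ u ∈ Xs i, L.inf' hL (fun v => dist u v)
        ≤ 4 * lam) ∧
      (∑ v ∈ L, f v ≤ 4 * ∑ v ∈ Ls, y v * f v) ∧
      (univ.sup' (univ_nonempty_iff.mpr ⟨⟨0, hm⟩⟩)
          (fun i => (1 / ((Xs i).card : ℝ)) *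
            ∑ u ∈ Xs i, L.inf' hL (fun v => dist u v))
        + (1 / (Xc.card : ℝ)) * ∑ v ∈ L, f v
        ≤ 4 * (lam + (1 / (Xc.card : ℝ)) * ∑ v ∈ Ls, y v * f v)) := by
  classical
  set C : Ω → ℝ := fun u => ∑ v ∈ Ls, dist u v * z u v with hCdef
  set R : Ω → ℝ := fun u => (4/3) * C u with hRdef
  set B : Ω → Finset Ω := fun u => Ls.filter (fun v => dist u v ≤ R u) with hBdef
  have hterm0 : ∀ u ∈ Xc, ∀ v ∈ Ls, 0 ≤ dist u v * z u v :=
    fun u hu v hv => mul_nonneg dist_nonneg (hz01 u hu v hv).1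
  have hC0 : ∀ u ∈ Xc, 0 ≤ C u := by
    intro u hu
    rw [hCdef]
    exact Finset.sum_nonneg (fun v hv => hterm0 u hu v hv)
  have hR0 : ∀ u ∈ Xc, 0 ≤ R u := by
    intro u hu
    rw [hRdef]
    have := hC0 u hu
    positivity
  have hBsub : ∀ u, B u ⊆ Ls := by
    intro u
    rw [hBdef]
    exact filter_subset _ _
  have hBmem : ∀ u v, v ∈ B u → dist u v ≤ R u := by
    intro u v hv
    rw [hBdef] at hv
    exact (mem_filter.mp hv).2
  have hBz : ∀ u ∈ Xc, (1:ℝ)/4 ≤ ∑ v ∈ B u, z u v := by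
    intro u hu
    have hsplit : ∑ v ∈ B u, z u v
        + ∑ v ∈ Ls.filter (fun v => ¬ dist u v ≤ R u), z u v = 1 := by
      rw [hBdef]
      rw [Finset.sum_filter_add_sum_filter_not]
      exact hz1 u hu
    set p := ∑ v ∈ Ls.filter (fun v => ¬ dist u v ≤ R u), z u v with hpdef
    have hp0 : 0 ≤ p := Finset.sum_nonneg
      (fun v hv => (hz01 u hu v ((filter_subset _ _) hv)).1)
    have key : R u * p ≤ C u := by
      rw [hpdef, Finset.mul_sum]
      calc ∑ v ∈ Ls.filter (fun v => ¬ dist u v ≤ R u), R u * z u v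
          ≤ ∑ v ∈ Ls.filter (fun v => ¬ dist u v ≤ R u), dist u v * z u v := by
            refine Finset.sum_le_sum (fun v hv => ?_)
            have h1 := not_le.mp (mem_filter.mp hv).2
            exact mul_le_mul_of_nonneg_right h1.le
              (hz01 u hu v ((filter_subset _ _) hv)).1
        _ ≤ ∑ v ∈ Ls, dist u v * z u v := by
            refine Finset.sum_le_sum_of_subset_of_nonneg (filter_subset _ _)
              (fun v hv _ => hterm0 u hu v hv)
        _ = C u := by rw [hCdef]
    have hp34 : p ≤ 3/4 := by
      rcases eq_or_lt_of_le (hC0 u hu) with hC | hC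
      · have hall : ∀ v ∈ Ls, dist u v * z u v = 0 := by
          have h0 : ∑ v ∈ Ls, dist u v * z u v = 0 := hC.symm
          exact (Finset.sum_eq_zero_iff_of_nonneg (fun v hv => hterm0 u hu v hv)).mp h0
        have hpz : p = 0 := by
          rw [hpdef]
          refine Finset.sum_eq_zero (fun v hv => ?_)
          have hvLs := (filter_subset _ _) hv
          have hgt : R u < dist u v := not_le.mp (mem_filter.mp hv).2
          have hRu0 : R u = 0 := by rw [hRdef]; simp [← hC]
          have hd : 0 < dist u v := hRu0 ▸ hgt
          have := hall v hvLs
          rcases mul_eq_zero.mp this with h | h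
          · exact absurd h hd.ne'
          · exact h
        linarith
      · have hRu : R u = (4/3) * C u := by rw [hRdef]
        rw [hRu] at key
        nlinarith
    linarith
  have hBy : ∀ u ∈ Xc, (1:ℝ)/4 ≤ ∑ v ∈ B u, y v := by
    intro u hu
    refine le_trans (hBz u hu) (Finset.sum_le_sum (fun v hv => hzy u hu v (hBsub u hv)))
  have hBne : ∀ u ∈ Xc, (B u).Nonempty := by
    intro u hu
    rcases Finset.eq_empty_or_nonempty (B u) with h | h
    · exfalso
      have := hBz u hu
      rw [h] at this
      simp at this
      linarith
    · exact h
  obtain ⟨S, hSsub, hSdisj, hScov⟩ := greedy_cluster R B Xc hBne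
  have hminf : ∀ s, s ∈ S → ∃ v, v ∈ B s ∧ ∀ w ∈ B s, f v ≤ f w := by
    intro s hs
    obtain ⟨v, hv, h⟩ := (B s).exists_min_image f (hBne s (hSsub hs))
    exact ⟨v, hv, h⟩
  choose! g hg1 hg2 using hminf
  set L := S.image g with hLdef
  have hXcne : Xc.Nonempty := by
    obtain ⟨x, hx⟩ := hXne ⟨0, hm⟩
    exact ⟨x, hXsub ⟨0, hm⟩ hx⟩
  have hSne : S.Nonempty := by
    obtain ⟨u, hu⟩ := hXcne
    obtain ⟨s, hs, -, -⟩ := hScov u hu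
    exact ⟨s, hs⟩
  have hL : L.Nonempty := hSne.image g
  have hLsub : L ⊆ Ls := by
    intro v hv
    obtain ⟨s, hs, rfl⟩ := mem_image.mp hv
    exact hBsub s (hg1 s hs)
  have hginj : ∀ s ∈ S, ∀ t ∈ S, g s = g t → s = t := by
    intro s hs t ht h
    by_contra hne
    exact (Finset.disjoint_left.mp (hSdisj s hs t ht hne) (hg1 s hs)) (h ▸ hg1 t ht)
  have hcost : ∑ v ∈ L, f v ≤ 4 * ∑ v ∈ Ls, y v * f v := by
    have e1 : ∑ v ∈ L, f v = ∑ s ∈ S, f (g s) := by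
      rw [hLdef]
      exact Finset.sum_image hginj
    have per : ∀ s ∈ S, f (g s) ≤ 4 * ∑ v ∈ B s, y v * f v := by
      intro s hs
      have hsX := hSsub hs
      have hfg0 : 0 ≤ f (g s) := hf _ (hBsub s (hg1 s hs))
      have h14 := hBy s hsX
      calc f (g s) = 4 * ((1/4) * f (g s)) := by ring
        _ ≤ 4 * ((∑ v ∈ B s, y v) * f (g s)) := by nlinarith
        _ = 4 * ∑ v ∈ B s, y v * f (g s) := by rw [Finset.sum_mul]
        _ ≤ 4 * ∑ v ∈ B s, y v * f v := by
            have h := Finset.sum_le_sum (fun v hv =>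
              mul_le_mul_of_nonneg_left (hg2 s hs v hv) (hy01 v (hBsub s hv)).1)
            linarith
    have hpd : (↑S : Set Ω).PairwiseDisjoint B := by
      intro s hs t ht hst
      exact hSdisj s hs t ht hst
    have e2 : ∑ s ∈ S, ∑ v ∈ B s, y v * f v = ∑ v ∈ S.biUnion B, y v * f v :=
      (Finset.sum_biUnion hpd).symm
    have e3 : ∑ v ∈ S.biUnion B, y v * f v ≤ ∑ v ∈ Ls, y v * f v :=
      Finset.sum_le_sum_of_subset_of_nonneg (Finset.biUnion_subset.mpr fun s _ => hBsub s)
        (fun v hv _ => mul_nonneg (hy01 v hv).1 (hf v hv))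
    calc ∑ v ∈ L, f v = ∑ s ∈ S, f (g s) := e1
      _ ≤ ∑ s ∈ S, 4 * ∑ v ∈ B s, y v * f v := Finset.sum_le_sum per
      _ = 4 * ∑ s ∈ S, ∑ v ∈ B s, y v * f v := by rw [Finset.mul_sum]
      _ = 4 * ∑ v ∈ S.biUnion B, y v * f v := by rw [e2]
      _ ≤ 4 * ∑ v ∈ Ls, y v * f v := by linarith
  have hdist : ∀ u ∈ Xc, L.inf' hL (fun v => dist u v) ≤ 4 * C u := by
    intro u hu
    obtain ⟨s, hs, hRs, ⟨w, hw⟩⟩ := hScov u hu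
    have hw1 : w ∈ B s := (mem_inter.mp hw).1
    have hw2 : w ∈ B u := (mem_inter.mp hw).2
    have h1 : dist s w ≤ R s := hBmem s w hw1
    have h2 : dist u w ≤ R u := hBmem u w hw2
    have h3 : dist s (g s) ≤ R s := hBmem s (g s) (hg1 s hs)
    have hmem : g s ∈ L := by rw [hLdef]; exact mem_image_of_mem g hs
    have hle : L.inf' hL (fun v => dist u v) ≤ dist u (g s) :=
      Finset.inf'_le _ hmem
    have tri : dist u (g s) ≤ dist u w + dist w s + dist s (g s) :=
      dist_triangle4 u w s (g s)
    have hcw : dist w s = dist s w := dist_comm w s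
    have hRu : R u = (4/3) * C u := by rw [hRdef]
    linarith
  have hgroup : ∀ i, (1 / ((Xs i).card : ℝ)) *
      ∑ u ∈ Xs i, L.inf' hL (fun v => dist u v) ≤ 4 * lam := by
    intro i
    have hc : (0:ℝ) < ((Xs i).card : ℝ) := by
      exact_mod_cast Finset.card_pos.mpr (hXne i)
    have h1 : ∑ u ∈ Xs i, L.inf' hL (fun v => dist u v) ≤ ∑ u ∈ Xs i, 4 * C u :=
      Finset.sum_le_sum (fun u hu => hdist u (hXsub i hu))
    have h2 : (1 / ((Xs i).card : ℝ)) * ∑ u ∈ Xs i, C u ≤ lam := hlam i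
    have h3 : (0:ℝ) ≤ 1 / ((Xs i).card : ℝ) := by positivity
    calc (1 / ((Xs i).card : ℝ)) * ∑ u ∈ Xs i, L.inf' hL (fun v => dist u v)
        ≤ (1 / ((Xs i).card : ℝ)) * ∑ u ∈ Xs i, 4 * C u :=
          mul_le_mul_of_nonneg_left h1 h3
      _ = 4 * ((1 / ((Xs i).card : ℝ)) * ∑ u ∈ Xs i, C u) := by
          rw [← Finset.mul_sum]; ring
      _ ≤ 4 * lam := by linarith
  refine ⟨L, hL, hLsub, hgroup, hcost, ?_⟩
  have hcard : (0:ℝ) ≤ 1 / (Xc.card : ℝ) := by positivity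
  have hsup : univ.sup' (univ_nonempty_iff.mpr ⟨⟨0, hm⟩⟩)
      (fun i => (1 / ((Xs i).card : ℝ)) *
        ∑ u ∈ Xs i, L.inf' hL (fun v => dist u v)) ≤ 4 * lam :=
    Finset.sup'_le _ _ (fun i _ => hgroup i)
  have h5 : (1 / (Xc.card : ℝ)) * ∑ v ∈ L, f v
      ≤ (1 / (Xc.card : ℝ)) * (4 * ∑ v ∈ Ls, y v * f v) :=
    mul_le_mul_of_nonneg_left hcost hcard
  have h6 : (1 / (Xc.card : ℝ)) * (4 * ∑ v ∈ Ls, y v * f v)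
      = 4 * ((1 / (Xc.card : ℝ)) * ∑ v ∈ Ls, y v * f v) := by ring
  linarith
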